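/- Let X be an instance space of size 5 and C the class of all subsets of X of size at most 3. Then VCD(C) = 3, every concept of size exactly 3 has teaching dimension 3 with respect to C, every concept of size at most 2 has teaching dimension 5 with respect to C, so TD(C) = 5, and RTD(C) = 3. -/

import Mathlib

/-- A concept class `C` shatters `Y` if every subset of `Y` is cut out by some concept. -/
def Shatters {α : Type*} (C : Set (Set α)) (Y : Set α) : Prop :=
  ∀ Z ⊆ Y, ∃ c ∈ C, Y ∩ c = Z

/-- The VC dimension of a concept class. -/
noncomputable def VCD {α : Type*} (C : Set (Set α)) : ℕ :=
  sSup { d : ℕ | ∃ Y : Finset α, Shatters C ↑Y ∧ Y.card = d }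

/-- Teaching dimension of a concept `c` w.r.t. class `C`. -/
noncomputable def TDc {α : Type*} (C : Set (Set α)) (c : Set α) : ℕ :=
  sInf { n | ∃ T : Finset α,
    (∀ c' ∈ C, (∀ x ∈ T, (x ∈ c' ↔ x ∈ c)) → c' = c) ∧ T.card = n }

/-- Teaching dimension of a class. -/
noncomputable def TD {α : Type*} (C : Set (Set α)) : ℕ :=
  sSup { n | ∃ c ∈ C, TDc C c = n }

/-- Minimum teaching dimension over the class. -/
noncomputable def TDmin {α : Type*} (C : Set (Set α)) : ℕ :=
  sInf { n | ∃ c ∈ C, TDc C c = n }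

/-- Removing the easiest-to-teach concepts. -/
noncomputable def peel {α : Type*} (C : Set (Set α)) : Set (Set α) :=
  { c ∈ C | TDc C c ≠ TDmin C }

/-- Recursive teaching dimension. -/
noncomputable def RTD {α : Type*} (C : Set (Set α)) : ℕ :=
  sSup { n | ∃ i : ℕ, (peel^[i] C).Nonempty ∧ TDmin (peel^[i] C) = n }

section Aux
variable {α : Type*} [Fintype α]

lemma agree_diff' {c : Set α} {x : α} {T : Finset α} (hx : x ∉ T) :
    ∀ y ∈ T, (y ∈ c \ {x} ↔ y ∈ c) := by
  intro y hy
  simp only [Set.mem_diff, Set.mem_singleton_iff]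
  refine ⟨fun h => h.1, fun h => ⟨h, fun h' => hx (h' ▸ hy)⟩⟩

lemma TDc_full {k : ℕ} {c : Set α} (hc : c.ncard = k) :
    TDc {c : Set α | c.ncard ≤ k} c = k := by
  have hmem : k ∈ { n | ∃ T : Finset α,
      (∀ c' ∈ {c : Set α | c.ncard ≤ k}, (∀ x ∈ T, (x ∈ c' ↔ x ∈ c)) → c' = c) ∧ T.card = n } := by
    refine ⟨(Set.toFinite c).toFinset, fun c' hc' hag => ?_,
      by rw [← Set.ncard_eq_toFinset_card _ (Set.toFinite c), hc]⟩
    have hsub : c ⊆ c' := fun x hx => (hag x ((Set.Finite.mem_toFinset _).2 hx)).2 hx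
    exact (Set.eq_of_subset_of_ncard_le hsub (le_of_le_of_eq hc' hc.symm)).symm
  refine le_antisymm (Nat.sInf_le hmem) (le_csInf ⟨k, hmem⟩ ?_)
  rintro n ⟨T, hT, rfl⟩
  have hsub : c ⊆ ↑T := by
    by_contra h
    rw [Set.not_subset] at h
    obtain ⟨x, hxc, hxT⟩ := h
    have hmem' : c \ {x} ∈ {c : Set α | c.ncard ≤ k} := by
      simp only [Set.mem_setOf_eq]
      exact le_of_le_of_eq (Set.ncard_le_ncard Set.diff_subset (Set.toFinite _)) hc
    have heq := hT _ hmem' (agree_diff' (by simpa using hxT))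
    have : x ∉ c \ {x} := fun h => h.2 rfl
    rw [heq] at this
    exact this hxc
  calc k = c.ncard := hc.symm
    _ ≤ (↑T : Set α).ncard := Set.ncard_le_ncard hsub (Set.toFinite _)
    _ = T.card := Set.ncard_coe_finset T

lemma TDc_nonfull {k : ℕ} {c : Set α} (hc : c.ncard < k) :
    TDc {c : Set α | c.ncard ≤ k} c = Fintype.card α := by
  have hmem : Fintype.card α ∈ { n | ∃ T : Finset α,
      (∀ c' ∈ {c : Set α | c.ncard ≤ k}, (∀ x ∈ T, (x ∈ c' ↔ x ∈ c)) → c' = c) ∧ T.card = n } :=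
    ⟨Finset.univ, fun c' _ hag => Set.ext fun x => hag x (Finset.mem_univ x), Finset.card_univ⟩
  refine le_antisymm (Nat.sInf_le hmem) (le_csInf ⟨_, hmem⟩ ?_)
  rintro n ⟨T, hT, rfl⟩
  have hTu : T = Finset.univ := by
    rw [Finset.eq_univ_iff_forall]
    intro x
    by_contra hxT
    by_cases hxc : x ∈ c
    · have hmem' : c \ {x} ∈ {c : Set α | c.ncard ≤ k} :=
        le_of_lt (lt_of_le_of_lt (Set.ncard_le_ncard Set.diff_subset (Set.toFinite _)) hc)
      have heq := hT _ hmem' (agree_diff' hxT)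
      have : x ∉ c \ {x} := fun h => h.2 rfl
      rw [heq] at this
      exact this hxc
    · have hmem' : insert x c ∈ {c : Set α | c.ncard ≤ k} := by
        simp only [Set.mem_setOf_eq, Set.ncard_insert_of_notMem hxc (Set.toFinite _)]
        omega
      have hag : ∀ y ∈ T, (y ∈ insert x c ↔ y ∈ c) := by
        intro y hy
        simp only [Set.mem_insert_iff]
        refine ⟨fun h => h.elim (fun h' => absurd (h' ▸ hy) hxT) id, Or.inr⟩
      have heq := hT _ hmem' hag
      have : x ∈ insert x c := Set.mem_insert x c
      rw [heq] at this
      exact hxc this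
  rw [hTu, Finset.card_univ]

lemma TDmin_eq (k : ℕ) (hk : k ≤ Fintype.card α) :
    TDmin {c : Set α | c.ncard ≤ k} = k := by
  obtain ⟨S, -, hS⟩ := Finset.exists_subset_card_eq (s := (Finset.univ : Finset α))
    (n := k) (by simpa using hk)
  have hmem : k ∈ { n | ∃ c ∈ {c : Set α | c.ncard ≤ k}, TDc {c : Set α | c.ncard ≤ k} c = n } := by
    refine ⟨↑S, ?_, ?_⟩
    · simp [Set.ncard_coe_finset, hS]
    · exact TDc_full (by rw [Set.ncard_coe_finset, hS])
  refine le_antisymm (Nat.sInf_le hmem) (le_csInf ⟨_, hmem⟩ ?_)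
  rintro n ⟨c, hc, rfl⟩
  have hck : c.ncard ≤ k := hc
  rcases lt_or_eq_of_le hck with h | h
  · rw [TDc_nonfull h]; exact hk
  · rw [TDc_full h]

lemma peel_eq (k : ℕ) (hk1 : 1 ≤ k) (hk : k < Fintype.card α) :
    peel {c : Set α | c.ncard ≤ k} = {c : Set α | c.ncard ≤ k - 1} := by
  ext c
  simp only [peel, TDmin_eq k hk.le, Set.mem_setOf_eq, Set.mem_sep_iff]
  constructor
  · rintro ⟨h1, h2⟩
    rcases lt_or_eq_of_le h1 with h | h
    · omega
    · exact absurd (TDc_full h) h2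
  · intro h
    have hlt : c.ncard < k := by omega
    exact ⟨hlt.le, by rw [TDc_nonfull hlt]; omega⟩

lemma peel_empty : peel (∅ : Set (Set α)) = ∅ := by
  simp [peel]

lemma peel_zero : peel {c : Set α | c.ncard ≤ 0} = ∅ := by
  ext c
  simp only [peel, Set.mem_sep_iff, Set.mem_setOf_eq, Set.mem_empty_iff_false, iff_false]
  rintro ⟨h1, h2⟩
  have h0 : c.ncard = 0 := le_antisymm h1 (Nat.zero_le _)
  exact h2 (by rw [TDc_full h0, TDmin_eq 0 (Nat.zero_le _)])

end Aux


/-- over an instance space of size 5, for the class of all subsets of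
size at most 3: `VCD = 3`, size-3 concepts have teaching dimension 3, concepts of size
at most 2 have teaching dimension 5, `TD = 5`, and `RTD = 3`. -/
theorem stmt10 {α : Type*} [Fintype α] (h5 : Fintype.card α = 5) :
    VCD { c : Set α | c.ncard ≤ 3 } = 3 ∧
    (∀ c : Set α, c.ncard = 3 → TDc { c : Set α | c.ncard ≤ 3 } c = 3) ∧
    (∀ c : Set α, c.ncard ≤ 2 → TDc { c : Set α | c.ncard ≤ 3 } c = 5) ∧
    TD { c : Set α | c.ncard ≤ 3 } = 5 ∧
    RTD { c : Set α | c.ncard ≤ 3 } = 3 := by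
  have hfull : ∀ c : Set α, c.ncard = 3 → TDc { c : Set α | c.ncard ≤ 3 } c = 3 :=
    fun c hc => TDc_full hc
  have hnonfull : ∀ c : Set α, c.ncard ≤ 2 → TDc { c : Set α | c.ncard ≤ 3 } c = 5 := by
    intro c hc
    rw [TDc_nonfull (by omega : c.ncard < 3), h5]
  -- VCD
  have hVCDbound : ∀ d ∈ { d : ℕ | ∃ Y : Finset α,
      Shatters { c : Set α | c.ncard ≤ 3 } ↑Y ∧ Y.card = d }, d ≤ 3 := by
    rintro d ⟨Y, hY, rfl⟩
    obtain ⟨c, hc, hYc⟩ := hY ↑Y (subset_refl _)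
    have hsub : (↑Y : Set α) ⊆ c := by
      rw [← hYc]; exact Set.inter_subset_right
    calc Y.card = (↑Y : Set α).ncard := (Set.ncard_coe_finset Y).symm
      _ ≤ c.ncard := Set.ncard_le_ncard hsub (Set.toFinite _)
      _ ≤ 3 := hc
  have hVCDmem : (3 : ℕ) ∈ { d : ℕ | ∃ Y : Finset α,
      Shatters { c : Set α | c.ncard ≤ 3 } ↑Y ∧ Y.card = d } := by
    obtain ⟨Y, -, hYcard⟩ := Finset.exists_subset_card_eq (s := (Finset.univ : Finset α)) (n := 3)
      (by simp [h5])
    refine ⟨Y, fun Z hZ => ⟨Z, ?_, Set.inter_eq_self_of_subset_right hZ⟩, hYcard⟩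
    calc Z.ncard ≤ (↑Y : Set α).ncard := Set.ncard_le_ncard hZ (Set.toFinite _)
      _ = 3 := by rw [Set.ncard_coe_finset, hYcard]
  have hVCD : VCD { c : Set α | c.ncard ≤ 3 } = 3 :=
    le_antisymm (csSup_le ⟨3, hVCDmem⟩ hVCDbound) (le_csSup ⟨3, hVCDbound⟩ hVCDmem)
  -- TD
  have hTDmem : (5 : ℕ) ∈ { n | ∃ c ∈ { c : Set α | c.ncard ≤ 3 },
      TDc { c : Set α | c.ncard ≤ 3 } c = n } :=
    ⟨∅, by simp, hnonfull ∅ (by simp)⟩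
  have hTDbound : ∀ n ∈ { n | ∃ c ∈ { c : Set α | c.ncard ≤ 3 },
      TDc { c : Set α | c.ncard ≤ 3 } c = n }, n ≤ 5 := by
    rintro n ⟨c, hc, rfl⟩
    have hck : c.ncard ≤ 3 := hc
    rcases lt_or_eq_of_le hck with h | h
    · rw [TDc_nonfull h, h5]
    · rw [TDc_full h]; omega
  have hTD : TD { c : Set α | c.ncard ≤ 3 } = 5 :=
    le_antisymm (csSup_le ⟨5, hTDmem⟩ hTDbound) (le_csSup ⟨5, hTDbound⟩ hTDmem)
  -- RTD
  have hcard3 : (3 : ℕ) ≤ Fintype.card α := by omega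
  have hp1 : peel { c : Set α | c.ncard ≤ 3 } = { c : Set α | c.ncard ≤ 2 } := by
    rw [peel_eq 3 (by omega) (by omega)]
  have hp2 : peel { c : Set α | c.ncard ≤ 2 } = { c : Set α | c.ncard ≤ 1 } := by
    rw [peel_eq 2 (by omega) (by omega)]
  have hp3 : peel { c : Set α | c.ncard ≤ 1 } = { c : Set α | c.ncard ≤ 0 } := by
    rw [peel_eq 1 (by omega) (by omega)]
  have hi0 : peel^[0] { c : Set α | c.ncard ≤ 3 } = { c : Set α | c.ncard ≤ 3 } := rfl
  have hi1 : peel^[1] { c : Set α | c.ncard ≤ 3 } = { c : Set α | c.ncard ≤ 2 } := by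
    rw [Function.iterate_one, hp1]
  have hi2 : peel^[2] { c : Set α | c.ncard ≤ 3 } = { c : Set α | c.ncard ≤ 1 } := by
    rw [show (2:ℕ) = 1 + 1 from rfl, Function.iterate_succ_apply', hi1, hp2]
  have hi3 : peel^[3] { c : Set α | c.ncard ≤ 3 } = { c : Set α | c.ncard ≤ 0 } := by
    rw [show (3:ℕ) = 2 + 1 from rfl, Function.iterate_succ_apply', hi2, hp3]
  have hi4 : ∀ j : ℕ, peel^[j + 4] { c : Set α | c.ncard ≤ 3 } = ∅ := by
    intro j
    induction j with
    | zero =>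
      rw [show (0+4:ℕ) = 3 + 1 from rfl, Function.iterate_succ_apply', hi3, peel_zero]
    | succ m ih =>
      rw [show (m+1+4:ℕ) = (m+4) + 1 from rfl, Function.iterate_succ_apply', ih, peel_empty]
  have hRTDmem : (3 : ℕ) ∈ { n | ∃ i : ℕ, (peel^[i] { c : Set α | c.ncard ≤ 3 }).Nonempty ∧
      TDmin (peel^[i] { c : Set α | c.ncard ≤ 3 }) = n } := by
    refine ⟨0, ⟨∅, by simp [hi0]⟩, ?_⟩
    rw [hi0, TDmin_eq 3 hcard3]
  have hRTDbound : ∀ n ∈ { n | ∃ i : ℕ, (peel^[i] { c : Set α | c.ncard ≤ 3 }).Nonempty ∧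
      TDmin (peel^[i] { c : Set α | c.ncard ≤ 3 }) = n }, n ≤ 3 := by
    rintro n ⟨i, hne, rfl⟩
    match i with
    | 0 => rw [hi0, TDmin_eq 3 (by omega)]
    | 1 => rw [hi1, TDmin_eq 2 (by omega)]; omega
    | 2 => rw [hi2, TDmin_eq 1 (by omega)]; omega
    | 3 => rw [hi3, TDmin_eq 0 (by omega)]; omega
    | (j+4) => rw [hi4 j] at hne; exact absurd hne (by simp)
  have hRTD : RTD { c : Set α | c.ncard ≤ 3 } = 3 :=
    le_antisymm (csSup_le ⟨3, hRTDmem⟩ hRTDbound) (le_csSup ⟨3, hRTDbound⟩ hRTDmem)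
  exact ⟨hVCD, hfull, hnonfull, hTD, hRTD⟩
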